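/- arXiv:math/0106116 — 5 statements merged into one kernel-verified Lean document; each statement's English description precedes it below -/
import Mathlib

section
/- Let u, v, w be mutually orthogonal unit imaginary octonions, and let R_u, R_v, R_w denote right multiplication by u, v, w. Suppose ζ₁ and ζ₂ are Cayley 4-planes such that, for i = 1, 2: R_u, R_v, R_w map ζᵢ into ζᵢ and (p·u)·v = −(p·v)·u = p·w for every p ∈ ζᵢ. Then ζ₁ = ζ₂. (Uniqueness part of the inverse of the isometry between CAYLEY and the Grassmannian of tricomplex sections.) -/
open Quaternion
open scoped InnerProductSpace

noncomputable section

/-- The octonions `𝕆`, realized as pairs of quaternions carrying the `L²` (Euclidean)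
inner product and norm of `ℝ⁸ ≅ ℍ × ℍ`. -/
abbrev Oct : Type := WithLp 2 (ℍ[ℝ] × ℍ[ℝ])

namespace Oct

/-- Build an octonion from a pair of quaternions. -/
def mk (a b : ℍ[ℝ]) : Oct := (WithLp.equiv 2 (ℍ[ℝ] × ℍ[ℝ])).symm (a, b)

/-- Cayley–Dickson multiplication: `(a,b)·(c,d) = (ac − d̄b, bc̄ + da)`. -/
def omul (x y : Oct) : Oct :=
  mk (x.ofLp.1 * y.ofLp.1 - star y.ofLp.2 * x.ofLp.2) (x.ofLp.2 * star y.ofLp.1 + y.ofLp.2 * x.ofLp.1)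

/-- Octonion conjugation: `(a,b)‾ = (ā, −b)`. -/
def oconj (x : Oct) : Oct := mk (star x.ofLp.1) (-x.ofLp.2)

/-- The unit octonion `1 = (1,0)`. -/
def oone : Oct := mk 1 0

/-- Imaginary part: `Im x = (x − x̄)/2`. -/
def oim (x : Oct) : Oct := (2⁻¹ : ℝ) • (x - oconj x)

/-- An octonion is imaginary if `x̄ = −x`. -/
def IsImaginary (x : Oct) : Prop := oconj x = -x

/-- Two-fold cross product `x × y = Im(ȳx)`. -/
def cross2 (x y : Oct) : Oct := oim (omul (oconj y) x)

/-- Three-fold cross product `x × y × z = ½(x(ȳz) − z(ȳx))`. -/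
def cross3 (x y z : Oct) : Oct :=
  (2⁻¹ : ℝ) • (omul x (omul (oconj y) z) - omul z (omul (oconj y) x))

/-- A Cayley 4-plane: a 4-dimensional real linear subspace of `𝕆` closed under the
three-fold cross product. -/
def IsCayley (ζ : Submodule ℝ Oct) : Prop :=
  Module.finrank ℝ ζ = 4 ∧ ∀ x ∈ ζ, ∀ y ∈ ζ, ∀ z ∈ ζ, cross3 x y z ∈ ζ

/-- Real coordinates of an octonion with respect to the standard basis
`((1,0),(i,0),(j,0),(k,0),(0,1),(0,i),(0,j),(0,k))`. -/
def coord (x : Oct) : Fin 8 → ℝ :=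
  ![x.ofLp.1.re, x.ofLp.1.imI, x.ofLp.1.imJ, x.ofLp.1.imK, x.ofLp.2.re, x.ofLp.2.imI, x.ofLp.2.imJ, x.ofLp.2.imK]

/-- The octonion with the given real coordinates in the standard basis. -/
def ofCoords (g : Fin 8 → ℝ) : Oct :=
  mk ⟨g 0, g 1, g 2, g 3⟩ ⟨g 4, g 5, g 6, g 7⟩

/- ### Auxiliary lemmas -/

lemma omul_fst (x y : Oct) : (omul x y).ofLp.1 = x.ofLp.1 * y.ofLp.1 - star y.ofLp.2 * x.ofLp.2 := rfl
lemma omul_snd (x y : Oct) : (omul x y).ofLp.2 = x.ofLp.2 * star y.ofLp.1 + y.ofLp.2 * x.ofLp.1 := rfl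
lemma add_fst' (x y : Oct) : (x + y).ofLp.1 = x.ofLp.1 + y.ofLp.1 := rfl
lemma add_snd' (x y : Oct) : (x + y).ofLp.2 = x.ofLp.2 + y.ofLp.2 := rfl
lemma smul_fst' (r : ℝ) (x : Oct) : (r • x).ofLp.1 = r • x.ofLp.1 := rfl
lemma smul_snd' (r : ℝ) (x : Oct) : (r • x).ofLp.2 = r • x.ofLp.2 := rfl

lemma isImaginary_iff (x : Oct) : IsImaginary x ↔ x.ofLp.1.re = 0 := by
  constructor
  · intro h
    have h1 : star x.ofLp.1 = -x.ofLp.1 := congrArg (fun z : Oct => z.ofLp.1) h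
    have := congrArg QuaternionAlgebra.re h1
    simp [-WithLp.ofLp_fst] at this; linarith
  · intro h
    refine WithLp.ofLp_injective 2 (Prod.ext ?_ ?_)
    · show star x.ofLp.1 = -x.ofLp.1
      ext <;> simp [h, -WithLp.ofLp_fst]
    · rfl

lemma key (x y : Oct) (hx : IsImaginary x) (hy : IsImaginary y) (p : Oct) :
    omul (omul p x) y + omul (omul p y) x = (-2 * ⟪x,y⟫_ℝ) • p := by
  rw [isImaginary_iff] at hx hy
  have hin : (⟪x,y⟫_ℝ : ℝ) = x.ofLp.1.imI*y.ofLp.1.imI + x.ofLp.1.imJ*y.ofLp.1.imJ + x.ofLp.1.imK*y.ofLp.1.imK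
      + x.ofLp.2.re*y.ofLp.2.re + x.ofLp.2.imI*y.ofLp.2.imI + x.ofLp.2.imJ*y.ofLp.2.imJ + x.ofLp.2.imK*y.ofLp.2.imK := by
    rw [WithLp.prod_inner_apply, Quaternion.inner_def, Quaternion.inner_def]
    simp [Quaternion.re_mul, hx, hy, -WithLp.ofLp_fst, -WithLp.ofLp_snd]; ring
  refine WithLp.ofLp_injective 2 (Prod.ext ?_ ?_) <;>
    ext <;>
    · simp only [add_fst', add_snd', omul_fst, omul_snd, smul_fst', smul_snd', hin,
        Quaternion.re_mul, Quaternion.imI_mul, Quaternion.imJ_mul, Quaternion.imK_mul,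
        Quaternion.re_add, Quaternion.imI_add, Quaternion.imJ_add,
        Quaternion.imK_add, Quaternion.re_sub, Quaternion.imI_sub,
        Quaternion.imJ_sub, Quaternion.imK_sub, Quaternion.re_star,
        Quaternion.imI_star, Quaternion.imJ_star, Quaternion.imK_star,
        Quaternion.re_smul, Quaternion.imI_smul, Quaternion.imJ_smul,
        Quaternion.imK_smul, smul_eq_mul, hx, hy]
      ring

lemma anti {x y : Oct} (hx : IsImaginary x) (hy : IsImaginary y)
    (hxy : ⟪x,y⟫_ℝ = 0) (p : Oct) :
    omul (omul p x) y = - omul (omul p y) x := by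
  have := key x y hx hy p
  rw [hxy] at this
  simp only [mul_zero, zero_smul] at this
  exact eq_neg_of_add_eq_zero_left this

lemma sq {x : Oct} (hx : IsImaginary x) (p : Oct) :
    omul (omul p x) x = (-⟪x,x⟫_ℝ) • p := by
  have h := key x x hx hx p
  have h2 : (2:ℝ) • omul (omul p x) x = (-2 * ⟪x,x⟫_ℝ) • p := by
    rw [two_smul]; exact h
  have h3 := congrArg (fun z => (2⁻¹:ℝ) • z) h2
  simp only [smul_smul] at h3
  norm_num at h3
  rw [h3, WithLp.prod_inner_apply, ← neg_smul]
  congr 1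
  rw [← real_inner_self_eq_norm_sq, WithLp.prod_inner_apply]; ring

/-- Right multiplication as a linear map. -/
def omulRight (y : Oct) : Oct →ₗ[ℝ] Oct where
  toFun x := omul x y
  map_add' a b := by
    refine WithLp.ofLp_injective 2 (Prod.ext ?_ ?_) <;>
      simp only [omul_fst, omul_snd, add_fst', add_snd'] <;> noncomm_ring
  map_smul' r a := by
    refine WithLp.ofLp_injective 2 (Prod.ext ?_ ?_) <;>
      simp only [omul_fst, omul_snd, smul_fst', smul_snd', RingHom.id_apply] <;>
      simp [smul_sub, smul_add, smul_mul_assoc, mul_smul_comm]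

lemma omulRight_apply (y x : Oct) : omulRight y x = omul x y := rfl

lemma finrank_oct : Module.finrank ℝ Oct = 8 := by
  rw [(WithLp.linearEquiv 2 ℝ (ℍ[ℝ] × ℍ[ℝ])).finrank_eq]
  simp [Quaternion.finrank_eq_four]

lemma inner_oone (t : Oct) : ⟪oone, t⟫_ℝ = t.ofLp.1.re := by
  rw [WithLp.prod_inner_apply]
  show ⟪(1:ℍ[ℝ]), t.ofLp.1⟫_ℝ + ⟪(0:ℍ[ℝ]), t.ofLp.2⟫_ℝ = t.ofLp.1.re
  simp [Quaternion.inner_def]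

end Oct

/-- a Cayley 4-plane on which right multiplications by a given triple
`u, v, w` of mutually orthogonal unit imaginary octonions act as a hypercomplex
structure is unique. -/
theorem cayley_plane_unique_for_tricomplex_triple
    (u v w : Oct)
    (hu : ‖u‖ = 1) (hv : ‖v‖ = 1) (hw : ‖w‖ = 1)
    (hui : Oct.IsImaginary u) (hvi : Oct.IsImaginary v) (hwi : Oct.IsImaginary w)
    (huv : ⟪u, v⟫_ℝ = 0) (hvw : ⟪v, w⟫_ℝ = 0) (hwu : ⟪w, u⟫_ℝ = 0)
    (ζ₁ ζ₂ : Submodule ℝ Oct)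
    (hc₁ : Oct.IsCayley ζ₁) (hc₂ : Oct.IsCayley ζ₂)
    (hmap₁ : ∀ p ∈ ζ₁, Oct.omul p u ∈ ζ₁ ∧ Oct.omul p v ∈ ζ₁ ∧ Oct.omul p w ∈ ζ₁)
    (hmap₂ : ∀ p ∈ ζ₂, Oct.omul p u ∈ ζ₂ ∧ Oct.omul p v ∈ ζ₂ ∧ Oct.omul p w ∈ ζ₂)
    (hhyp₁ : ∀ p ∈ ζ₁, Oct.omul (Oct.omul p u) v = -Oct.omul (Oct.omul p v) u ∧
      Oct.omul (Oct.omul p u) v = Oct.omul p w)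
    (hhyp₂ : ∀ p ∈ ζ₂, Oct.omul (Oct.omul p u) v = -Oct.omul (Oct.omul p v) u ∧
      Oct.omul (Oct.omul p u) v = Oct.omul p w) :
    ζ₁ = ζ₂ := by
  classical
  set L : Oct →ₗ[ℝ] Oct := (Oct.omulRight v).comp (Oct.omulRight u) - Oct.omulRight w with hLdef
  set M : Oct →ₗ[ℝ] Oct := (Oct.omulRight v).comp (Oct.omulRight u) + Oct.omulRight w with hMdef
  have hζK : ∀ (ζ : Submodule ℝ Oct),
      (∀ p ∈ ζ, Oct.omul (Oct.omul p u) v = -Oct.omul (Oct.omul p v) u ∧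
        Oct.omul (Oct.omul p u) v = Oct.omul p w) → ζ ≤ LinearMap.ker L := by
    intro ζ hh p hp
    simp only [LinearMap.mem_ker, hLdef, LinearMap.sub_apply, LinearMap.comp_apply,
      Oct.omulRight_apply]
    rw [(hh p hp).2, sub_self]
  -- find an imaginary t orthogonal to u, v, w
  set S : Submodule ℝ Oct := Submodule.span ℝ ({Oct.oone, u, v, w} : Set Oct) with hSdef
  have hS : Module.finrank ℝ S ≤ 4 := by
    refine le_trans (finrank_span_le_card _) ?_
    rw [Set.toFinset_insert, Set.toFinset_insert, Set.toFinset_insert, Set.toFinset_singleton]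
    refine le_trans (Finset.card_insert_le _ _) ?_
    have h1 := Finset.card_insert_le u (insert v {w})
    have h2 := Finset.card_insert_le v ({w} : Finset Oct)
    have h3 := Finset.card_singleton w
    omega
  have hSne : S ≠ ⊤ := by
    intro h
    rw [h, finrank_top, Oct.finrank_oct] at hS
    omega
  have hne : Sᗮ ≠ ⊥ := by
    rwa [ne_eq, Submodule.orthogonal_eq_bot_iff]
  obtain ⟨t, htS, ht0⟩ := Submodule.exists_mem_ne_zero_of_ne_bot hne
  have hto : ∀ s ∈ ({Oct.oone, u, v, w} : Set Oct), ⟪s, t⟫_ℝ = 0 := fun s hs =>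
    (Submodule.mem_orthogonal S t).mp htS s (Submodule.subset_span hs)
  have hti : Oct.IsImaginary t := by
    rw [Oct.isImaginary_iff, ← Oct.inner_oone t]
    exact hto _ (by simp)
  have htu : ⟪t, u⟫_ℝ = 0 := by rw [real_inner_comm]; exact hto _ (by simp)
  have htv : ⟪t, v⟫_ℝ = 0 := by rw [real_inner_comm]; exact hto _ (by simp)
  have hwt : ⟪w, t⟫_ℝ = 0 := hto _ (by simp)
  have htw : ⟪t, w⟫_ℝ = 0 := by rw [real_inner_comm]; exact hwt
  have hww : ⟪w, w⟫_ℝ = 1 := by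
    rw [real_inner_self_eq_norm_mul_norm, hw]; norm_num
  -- multiplication by t maps ker L into ker M
  have hKM : ∀ p, p ∈ LinearMap.ker L → Oct.omul p t ∈ LinearMap.ker M := by
    intro p hp
    have hpw : Oct.omul (Oct.omul p u) v = Oct.omul p w := by
      have := hp
      simp only [LinearMap.mem_ker, hLdef, LinearMap.sub_apply, LinearMap.comp_apply,
        Oct.omulRight_apply] at this
      exact sub_eq_zero.mp this
    simp only [LinearMap.mem_ker, hMdef, LinearMap.add_apply, LinearMap.comp_apply,
      Oct.omulRight_apply]
    have s1 : Oct.omul (Oct.omul p t) u = - Oct.omul (Oct.omul p u) t :=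
      Oct.anti hti hui htu p
    have s2 : Oct.omul (Oct.omul (Oct.omul p u) t) v
        = - Oct.omul (Oct.omul (Oct.omul p u) v) t :=
      Oct.anti hti hvi htv (Oct.omul p u)
    have s3 : Oct.omul (Oct.omul p w) t = - Oct.omul (Oct.omul p t) w :=
      Oct.anti hwi hti hwt p
    have hneg : Oct.omul (- Oct.omul (Oct.omul p u) t) v
        = - Oct.omul (Oct.omul (Oct.omul p u) t) v := by
      have := (Oct.omulRight v).map_neg (Oct.omul (Oct.omul p u) t)
      simpa [Oct.omulRight_apply] using this
    rw [s1, hneg, s2, neg_neg, hpw, s3, neg_add_cancel]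
  -- injectivity of right multiplication by t
  have htt : ⟪t, t⟫_ℝ ≠ 0 := fun h => ht0 (inner_self_eq_zero.mp h)
  have hinj : Function.Injective (Oct.omulRight t) := by
    have : Function.Injective fun p => Oct.omulRight t p := by
      intro p q hpq
      have h0 : Oct.omul p t = Oct.omul q t := hpq
      have e1 := Oct.sq hti p
      have e2 := Oct.sq hti q
      rw [h0, e2] at e1
      have := smul_right_injective Oct (neg_ne_zero.mpr htt) e1.symm
      exact this
    exact this
  have hφmem : ∀ x : ζ₁, Oct.omulRight t x.1 ∈ LinearMap.ker M := fun x =>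
    hKM x.1 (hζK ζ₁ hhyp₁ x.2)
  let φ : ζ₁ →ₗ[ℝ] LinearMap.ker M :=
    LinearMap.codRestrict (LinearMap.ker M) ((Oct.omulRight t).domRestrict ζ₁) hφmem
  have hφinj : Function.Injective φ := by
    intro a b hab
    have : Oct.omulRight t a.1 = Oct.omulRight t b.1 := congrArg Subtype.val hab
    exact Subtype.ext (hinj this)
  have h4 : (4 : ℕ) ≤ Module.finrank ℝ (LinearMap.ker M) := by
    have := LinearMap.finrank_le_finrank_of_injective hφinj
    rw [hc₁.1] at this
    exact this
  have hinf : LinearMap.ker L ⊓ LinearMap.ker M = ⊥ := by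
    rw [eq_bot_iff]
    intro p hp
    obtain ⟨hp1, hp2⟩ := Submodule.mem_inf.mp hp
    simp only [LinearMap.mem_ker, hLdef, hMdef, LinearMap.sub_apply, LinearMap.add_apply,
      LinearMap.comp_apply, Oct.omulRight_apply] at hp1 hp2
    have ha : Oct.omul p w = 0 := by
      have h2 : (2 : ℝ) • Oct.omul p w = 0 := by
        rw [two_smul]
        have e : Oct.omul (Oct.omul p u) v = Oct.omul p w := sub_eq_zero.mp hp1
        nth_rewrite 1 [← e]
        exact hp2
      have := smul_eq_zero.mp h2
      rcases this with h | h
      · norm_num at h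
      · exact h
    have hb := Oct.sq hwi p
    rw [ha] at hb
    have hz : Oct.omul (0 : Oct) w = 0 := (Oct.omulRight w).map_zero
    rw [hz] at hb
    have hp0 : p = 0 := by
      have hne2 : (-⟪w,w⟫_ℝ) ≠ 0 := by rw [hww]; norm_num
      have h0 : (-⟪w,w⟫_ℝ) • p = (-⟪w,w⟫_ℝ) • (0 : Oct) := by
        rw [smul_zero]; exact hb.symm
      exact smul_right_injective Oct hne2 h0
    simpa using hp0
  have hsum := Submodule.finrank_sup_add_finrank_inf_eq (LinearMap.ker L) (LinearMap.ker M)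
  rw [hinf, finrank_bot, add_zero] at hsum
  have hle8 : Module.finrank ℝ ↥(LinearMap.ker L ⊔ LinearMap.ker M) ≤ 8 := by
    rw [← Oct.finrank_oct]
    exact Submodule.finrank_le _
  have hKle : Module.finrank ℝ (LinearMap.ker L) ≤ 4 := by omega
  have e1 : ζ₁ = LinearMap.ker L :=
    Submodule.eq_of_le_of_finrank_le (hζK ζ₁ hhyp₁) (by rw [hc₁.1]; exact hKle)
  have e2 : ζ₂ = LinearMap.ker L :=
    Submodule.eq_of_le_of_finrank_le (hζK ζ₂ hhyp₂) (by rw [hc₂.1]; exact hKle)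
  rw [e1, e2]

end
end

section
/- Let h₁, …, h₈ be quaternions, written h_α = a_α + b_α i + c_α j + d_α k with a_α, b_α, c_α, d_α real, and let a, b, c, d ∈ ℝ⁸ denote the corresponding vectors. Then Σ_{α=1}^{8} h̄_α i h_α = Σ_{α=1}^{8} h̄_α j h_α = Σ_{α=1}^{8} h̄_α k h_α = 0 holds if and only if the four vectors a, b, c, d are mutually orthogonal in ℝ⁸ and have equal Euclidean norms: ‖a‖ = ‖b‖ = ‖c‖ = ‖d‖. -/
open Quaternion
open scoped InnerProductSpace

noncomputable section

/-- The quaternion `i`. -/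
def qI : ℍ[ℝ] := ⟨0, 1, 0, 0⟩
/-- The quaternion `j`. -/
def qJ : ℍ[ℝ] := ⟨0, 0, 1, 0⟩
/-- The quaternion `k`. -/
def qK : ℍ[ℝ] := ⟨0, 0, 0, 1⟩


private lemma mI_re' (q : ℍ[ℝ]) : (star q * qI * q).re = 0 := by
  simp only [Quaternion.re_mul, Quaternion.imI_mul, Quaternion.imJ_mul, Quaternion.imK_mul]; simp [qI]; ring
private lemma mI_imI' (q : ℍ[ℝ]) : (star q * qI * q).imI = q.re^2 + q.imI^2 - q.imJ^2 - q.imK^2 := by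
  simp only [Quaternion.re_mul, Quaternion.imI_mul, Quaternion.imJ_mul, Quaternion.imK_mul]; simp [qI]; ring
private lemma mI_imJ' (q : ℍ[ℝ]) : (star q * qI * q).imJ = 2*(q.imI*q.imJ - q.re*q.imK) := by
  simp only [Quaternion.re_mul, Quaternion.imI_mul, Quaternion.imJ_mul, Quaternion.imK_mul]; simp [qI]; ring
private lemma mI_imK' (q : ℍ[ℝ]) : (star q * qI * q).imK = 2*(q.re*q.imJ + q.imI*q.imK) := by
  simp only [Quaternion.re_mul, Quaternion.imI_mul, Quaternion.imJ_mul, Quaternion.imK_mul]; simp [qI]; ring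
private lemma mJ_re' (q : ℍ[ℝ]) : (star q * qJ * q).re = 0 := by
  simp only [Quaternion.re_mul, Quaternion.imI_mul, Quaternion.imJ_mul, Quaternion.imK_mul]; simp [qJ]; ring
private lemma mJ_imI' (q : ℍ[ℝ]) : (star q * qJ * q).imI = 2*(q.imI*q.imJ + q.re*q.imK) := by
  simp only [Quaternion.re_mul, Quaternion.imI_mul, Quaternion.imJ_mul, Quaternion.imK_mul]; simp [qJ]; ring
private lemma mJ_imJ' (q : ℍ[ℝ]) : (star q * qJ * q).imJ = q.re^2 - q.imI^2 + q.imJ^2 - q.imK^2 := by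
  simp only [Quaternion.re_mul, Quaternion.imI_mul, Quaternion.imJ_mul, Quaternion.imK_mul]; simp [qJ]; ring
private lemma mJ_imK' (q : ℍ[ℝ]) : (star q * qJ * q).imK = 2*(q.imJ*q.imK - q.re*q.imI) := by
  simp only [Quaternion.re_mul, Quaternion.imI_mul, Quaternion.imJ_mul, Quaternion.imK_mul]; simp [qJ]; ring
private lemma mK_re' (q : ℍ[ℝ]) : (star q * qK * q).re = 0 := by
  simp only [Quaternion.re_mul, Quaternion.imI_mul, Quaternion.imJ_mul, Quaternion.imK_mul]; simp [qK]; ring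
private lemma mK_imI' (q : ℍ[ℝ]) : (star q * qK * q).imI = 2*(q.imI*q.imK - q.re*q.imJ) := by
  simp only [Quaternion.re_mul, Quaternion.imI_mul, Quaternion.imJ_mul, Quaternion.imK_mul]; simp [qK]; ring
private lemma mK_imJ' (q : ℍ[ℝ]) : (star q * qK * q).imJ = 2*(q.imJ*q.imK + q.re*q.imI) := by
  simp only [Quaternion.re_mul, Quaternion.imI_mul, Quaternion.imJ_mul, Quaternion.imK_mul]; simp [qK]; ring
private lemma mK_imK' (q : ℍ[ℝ]) : (star q * qK * q).imK = q.re^2 - q.imI^2 - q.imJ^2 + q.imK^2 := by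
  simp only [Quaternion.re_mul, Quaternion.imI_mul, Quaternion.imJ_mul, Quaternion.imK_mul]; simp [qK]; ring

private lemma sum_quat_eq_zero_iff (f : Fin 8 → ℍ[ℝ]) :
    (∑ α, f α) = 0 ↔ ((∑ α, (f α).re) = 0 ∧ (∑ α, (f α).imI) = 0 ∧
      (∑ α, (f α).imJ) = 0 ∧ (∑ α, (f α).imK) = 0) := by
  rw [Quaternion.ext_iff,
    show (∑ α, f α).re = ∑ α, (f α).re from
      map_sum (QuaternionAlgebra.reₗ (R := ℝ) (-1) 0 (-1)) f Finset.univ,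
    show (∑ α, f α).imI = ∑ α, (f α).imI from
      map_sum (QuaternionAlgebra.imIₗ (R := ℝ) (-1) 0 (-1)) f Finset.univ,
    show (∑ α, f α).imJ = ∑ α, (f α).imJ from
      map_sum (QuaternionAlgebra.imJₗ (R := ℝ) (-1) 0 (-1)) f Finset.univ,
    show (∑ α, f α).imK = ∑ α, (f α).imK from
      map_sum (QuaternionAlgebra.imKₗ (R := ℝ) (-1) 0 (-1)) f Finset.univ]
  simp

private lemma norm_eq_iff_sum_sq (x y : EuclideanSpace ℝ (Fin 8)) :
    ‖x‖ = ‖y‖ ↔ (∑ i, x i ^ 2) = ∑ i, y i ^ 2 := by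
  rw [EuclideanSpace.norm_eq, EuclideanSpace.norm_eq,
    Real.sqrt_inj (by positivity) (by positivity)]
  simp [Real.norm_eq_abs, sq_abs]

/-- for `h_α = a_α + b_α i + c_α j + d_α k`, the moment map equations
`Σ h̄_α i h_α = Σ h̄_α j h_α = Σ h̄_α k h_α = 0` hold iff the vectors
`a, b, c, d ∈ ℝ⁸` are mutually orthogonal and have equal Euclidean norms. -/
theorem moment_map_zero_iff_orthogonal_equal_norms
    (h : Fin 8 → ℍ[ℝ])
    (a b c d : EuclideanSpace ℝ (Fin 8))
    (ha : a = (WithLp.equiv 2 (Fin 8 → ℝ)).symm fun α => (h α).re)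
    (hb : b = (WithLp.equiv 2 (Fin 8 → ℝ)).symm fun α => (h α).imI)
    (hc : c = (WithLp.equiv 2 (Fin 8 → ℝ)).symm fun α => (h α).imJ)
    (hd : d = (WithLp.equiv 2 (Fin 8 → ℝ)).symm fun α => (h α).imK) :
    ((∑ α : Fin 8, star (h α) * qI * h α = 0) ∧
     (∑ α : Fin 8, star (h α) * qJ * h α = 0) ∧
     (∑ α : Fin 8, star (h α) * qK * h α = 0)) ↔
    (⟪a, b⟫_ℝ = 0 ∧ ⟪a, c⟫_ℝ = 0 ∧ ⟪a, d⟫_ℝ = 0 ∧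
     ⟪b, c⟫_ℝ = 0 ∧ ⟪b, d⟫_ℝ = 0 ∧ ⟪c, d⟫_ℝ = 0 ∧
     ‖a‖ = ‖b‖ ∧ ‖b‖ = ‖c‖ ∧ ‖c‖ = ‖d‖) := by
  subst ha hb hc hd
  rw [sum_quat_eq_zero_iff, sum_quat_eq_zero_iff, sum_quat_eq_zero_iff,
    norm_eq_iff_sum_sq, norm_eq_iff_sum_sq, norm_eq_iff_sum_sq]
  simp only [mI_re', mI_imI', mI_imJ', mI_imK', mJ_re', mJ_imI', mJ_imJ', mJ_imK',
    mK_re', mK_imI', mK_imJ', mK_imK', PiLp.inner_apply, RCLike.inner_apply,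
    conj_trivial, WithLp.equiv_symm_apply, PiLp.toLp_apply, Finset.sum_const_zero,
    Finset.sum_add_distrib, Finset.sum_sub_distrib, ← Finset.mul_sum,
    eq_self_iff_true, true_and, mul_comm, sub_mul, add_mul, ← Finset.sum_mul]
  constructor
  · rintro ⟨⟨h1, h2, h3⟩, ⟨h4, h5, h6⟩, ⟨h7, h8, h9⟩⟩
    refine ⟨by linarith, by linarith, by linarith, by linarith, by linarith, by linarith,
      by linarith, by linarith, by linarith⟩
  · rintro ⟨h1, h2, h3, h4, h5, h6, h7, h8, h9⟩
    refine ⟨⟨by linarith, by linarith, by linarith⟩, ⟨by linarith, by linarith, by linarith⟩,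
      ⟨by linarith, by linarith, by linarith⟩⟩
end
end

section
/- If x and y are orthogonal octonions (⟨x,y⟩ = 0), then for every octonion w one has (wȳ)x = −(wx̄)y. -/
open Quaternion
open scoped InnerProductSpace

noncomputable section

lemma oct_key1 (a b c d p q : ℍ[ℝ]) (h : (a * star c).re + (b * star d).re = 0) :
    (p * star c + star d * q) * a - star b * (q * c - d * p)
      = -((p * star a + star b * q) * c - star d * (q * a - b * p)) := by
  rw [eq_neg_iff_add_eq_zero]
  have e1 : star c * a + star a * c = ((2 * (a * star c).re : ℝ) : ℍ[ℝ]) := by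
    have h0 : (star c * a).re = (a * star c).re := by simp [Quaternion.re_mul]; try ring
    have := Quaternion.self_add_star' (star c * a)
    rw [star_mul, star_star, h0] at this; exact this
  have e2 : star b * d + star d * b = ((2 * (b * star d).re : ℝ) : ℍ[ℝ]) := by
    have h0 : (star b * d).re = (b * star d).re := by simp [Quaternion.re_mul]; try ring
    have := Quaternion.self_add_star' (star b * d)
    rw [star_mul, star_star, h0] at this; exact this
  have expand : (p * star c + star d * q) * a - star b * (q * c - d * p)
      + ((p * star a + star b * q) * c - star d * (q * a - b * p))
      = p * (star c * a + star a * c) + (star b * d + star d * b) * p := by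
    noncomm_ring
  rw [expand, e1, e2, Quaternion.coe_commutes, ← mul_add, ← Quaternion.coe_add]
  have h2 : 2 * (a * star c).re + 2 * (b * star d).re = 0 := by linarith
  rw [h2, Quaternion.coe_zero, mul_zero]

lemma oct_key2 (a b c d p q : ℍ[ℝ]) (h : (a * star c).re + (b * star d).re = 0) :
    (q * c - d * p) * star a + b * (p * star c + star d * q)
      = -((q * a - b * p) * star c + d * (p * star a + star b * q)) := by
  rw [eq_neg_iff_add_eq_zero]
  have e1 : c * star a + a * star c = ((2 * (a * star c).re : ℝ) : ℍ[ℝ]) := by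
    have h0 : (c * star a).re = (a * star c).re := by simp [Quaternion.re_mul]; try ring
    have := Quaternion.self_add_star' (c * star a)
    rw [star_mul, star_star, h0] at this; exact this
  have e2 : b * star d + d * star b = ((2 * (b * star d).re : ℝ) : ℍ[ℝ]) := by
    have := Quaternion.self_add_star' (b * star d)
    rw [star_mul, star_star] at this; exact this
  have expand : (q * c - d * p) * star a + b * (p * star c + star d * q)
      + ((q * a - b * p) * star c + d * (p * star a + star b * q))
      = q * (c * star a + a * star c) + (b * star d + d * star b) * q := by
    noncomm_ring
  rw [expand, e1, e2, Quaternion.coe_commutes, ← mul_add, ← Quaternion.coe_add]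
  have h2 : 2 * (a * star c).re + 2 * (b * star d).re = 0 := by linarith
  rw [h2, Quaternion.coe_zero, mul_zero]

/-- for orthogonal octonions `x, y` and any octonion `w`:
`(wȳ)x = −(wx̄)y`. -/
theorem mul_conj_mul_orthogonal_right (x y : Oct) (hxy : ⟪x, y⟫_ℝ = 0) (w : Oct) :
    Oct.omul (Oct.omul w (Oct.oconj y)) x = -Oct.omul (Oct.omul w (Oct.oconj x)) y := by
  have h : (x.ofLp.1 * star y.ofLp.1).re + (x.ofLp.2 * star y.ofLp.2).re = 0 := by
    simpa [WithLp.prod_inner_apply, Quaternion.inner_def] using hxy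
  have k1 := oct_key1 x.ofLp.1 x.ofLp.2 y.ofLp.1 y.ofLp.2 w.ofLp.1 w.ofLp.2 h
  have k2 := oct_key2 x.ofLp.1 x.ofLp.2 y.ofLp.1 y.ofLp.2 w.ofLp.1 w.ofLp.2 h
  apply WithLp.ofLp_injective
  apply Prod.ext
  · show (w.ofLp.1 * star y.ofLp.1 - star (-y.ofLp.2) * w.ofLp.2) * x.ofLp.1 - star x.ofLp.2 * (w.ofLp.2 * star (star y.ofLp.1) + -y.ofLp.2 * w.ofLp.1)
      = -((w.ofLp.1 * star x.ofLp.1 - star (-x.ofLp.2) * w.ofLp.2) * y.ofLp.1 - star y.ofLp.2 * (w.ofLp.2 * star (star x.ofLp.1) + -x.ofLp.2 * w.ofLp.1))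
    simp only [star_neg, star_star]
    linear_combination (norm := noncomm_ring) k1
  · show (w.ofLp.2 * star (star y.ofLp.1) + -y.ofLp.2 * w.ofLp.1) * star x.ofLp.1 + x.ofLp.2 * (w.ofLp.1 * star y.ofLp.1 - star (-y.ofLp.2) * w.ofLp.2)
      = -((w.ofLp.2 * star (star x.ofLp.1) + -x.ofLp.2 * w.ofLp.1) * star y.ofLp.1 + y.ofLp.2 * (w.ofLp.1 * star x.ofLp.1 - star (-x.ofLp.2) * w.ofLp.2))
    simp only [star_neg, star_star]
    linear_combination (norm := noncomm_ring) k2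
end
end

section
/- For all octonions x, y, z the middle Moufang identity holds: (xy)(zx) = (x(yz))x, and moreover (x(yz))x = x((yz)x), so that (xy)(zx) = x(yz)x is unambiguous. -/
open Quaternion
open scoped InnerProductSpace

noncomputable section

set_option maxHeartbeats 4000000 in
/-- the middle Moufang identity `(xy)(zx) = (x(yz))x` holds in the
octonions, and `(x(yz))x = x((yz)x)`, so `(xy)(zx) = x(yz)x` is unambiguous. -/
theorem moufang_middle (x y z : Oct) :
    Oct.omul (Oct.omul x y) (Oct.omul z x) = Oct.omul (Oct.omul x (Oct.omul y z)) x ∧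
      Oct.omul (Oct.omul x (Oct.omul y z)) x = Oct.omul x (Oct.omul (Oct.omul y z) x) := by

  obtain ⟨⟨a1, a2⟩⟩ := x
  obtain ⟨⟨b1, b2⟩⟩ := y
  obtain ⟨⟨c1, c2⟩⟩ := z
  constructor <;>
  · unfold Oct.omul Oct.mk
    refine congrArg (WithLp.equiv 2 (ℍ[ℝ] × ℍ[ℝ])).symm (Prod.ext (QuaternionAlgebra.ext ?_ ?_ ?_ ?_) (QuaternionAlgebra.ext ?_ ?_ ?_ ?_)) <;>
    · simp only [Quaternion.re_mul, Quaternion.imI_mul, Quaternion.imJ_mul, Quaternion.imK_mul,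
        Quaternion.re_sub, Quaternion.imI_sub, Quaternion.imJ_sub, Quaternion.imK_sub,
        Quaternion.re_add, Quaternion.imI_add, Quaternion.imJ_add, Quaternion.imK_add,
        Quaternion.re_star, Quaternion.imI_star, Quaternion.imJ_star, Quaternion.imK_star,
        WithLp.equiv_symm_apply, WithLp.ofLp_toLp]
      ring
end
end

section
/- If x, y, z are mutually orthogonal octonions, then x(ȳz) = −z(ȳx), and consequently the three-fold cross product simplifies to x × y × z = x(ȳz). -/
open Quaternion
open scoped InnerProductSpace

noncomputable section

/-- for mutually orthogonal octonions `x, y, z` one has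
`x(ȳz) = −z(ȳx)`, hence `x × y × z = x(ȳz)`. -/
theorem cross3_eq_of_mutually_orthogonal
    (x y z : Oct)
    (hxy : ⟪x, y⟫_ℝ = 0) (hyz : ⟪y, z⟫_ℝ = 0) (hzx : ⟪z, x⟫_ℝ = 0) :
    Oct.omul x (Oct.omul (Oct.oconj y) z) = -Oct.omul z (Oct.omul (Oct.oconj y) x) ∧
      Oct.cross3 x y z = Oct.omul x (Oct.omul (Oct.oconj y) z) := by
  rw [WithLp.prod_inner_apply] at hxy hyz hzx
  simp only [Quaternion.inner_def, Quaternion.re_mul, Quaternion.re_star, Quaternion.imI_star,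
    Quaternion.imJ_star, Quaternion.imK_star] at hxy hyz hzx
  have key : Oct.omul x (Oct.omul (Oct.oconj y) z) = -Oct.omul z (Oct.omul (Oct.oconj y) x) := by
    have hneg1 : ∀ w : Oct, (-w).ofLp.1 = -w.ofLp.1 := fun _ => rfl
    have hneg2 : ∀ w : Oct, (-w).ofLp.2 = -w.ofLp.2 := fun _ => rfl
    have hmk1 : ∀ a b : ℍ[ℝ], (Oct.mk a b).ofLp.1 = a := fun _ _ => rfl
    have hmk2 : ∀ a b : ℍ[ℝ], (Oct.mk a b).ofLp.2 = b := fun _ _ => rfl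
    refine WithLp.ofLp_injective (p := 2) (Prod.ext ?_ ?_) <;>
      simp only [Oct.omul, Oct.oconj, hneg1, hneg2, hmk1, hmk2] <;>
      refine Quaternion.ext _ _ ?_ ?_ ?_ ?_ <;>
      simp only [Quaternion.re_mul, Quaternion.imI_mul, Quaternion.imJ_mul, Quaternion.imK_mul,
        Quaternion.re_star, Quaternion.imI_star, Quaternion.imJ_star, Quaternion.imK_star,
        Quaternion.re_sub, Quaternion.imI_sub, Quaternion.imJ_sub, Quaternion.imK_sub,
        Quaternion.re_add, Quaternion.imI_add, Quaternion.imJ_add, Quaternion.imK_add,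
        Quaternion.re_neg, Quaternion.imI_neg, Quaternion.imJ_neg, Quaternion.imK_neg]
    · linear_combination (2*z.ofLp.1.re)*hxy + (2*x.ofLp.1.re)*hyz - (2*y.ofLp.1.re)*hzx
    · linear_combination (2*z.ofLp.1.imI)*hxy + (2*x.ofLp.1.imI)*hyz - (2*y.ofLp.1.imI)*hzx
    · linear_combination (2*z.ofLp.1.imJ)*hxy + (2*x.ofLp.1.imJ)*hyz - (2*y.ofLp.1.imJ)*hzx
    · linear_combination (2*z.ofLp.1.imK)*hxy + (2*x.ofLp.1.imK)*hyz - (2*y.ofLp.1.imK)*hzx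
    · linear_combination (2*z.ofLp.2.re)*hxy + (2*x.ofLp.2.re)*hyz - (2*y.ofLp.2.re)*hzx
    · linear_combination (2*z.ofLp.2.imI)*hxy + (2*x.ofLp.2.imI)*hyz - (2*y.ofLp.2.imI)*hzx
    · linear_combination (2*z.ofLp.2.imJ)*hxy + (2*x.ofLp.2.imJ)*hyz - (2*y.ofLp.2.imJ)*hzx
    · linear_combination (2*z.ofLp.2.imK)*hxy + (2*x.ofLp.2.imK)*hyz - (2*y.ofLp.2.imK)*hzx
  refine ⟨key, ?_⟩
  rw [Oct.cross3, show Oct.omul z (Oct.omul (Oct.oconj y) x)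
      = -Oct.omul x (Oct.omul (Oct.oconj y) z) by rw [key, neg_neg], sub_neg_eq_add]
  module
end
end
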